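/- Let 𝒮 ⊂ ℝⁿ be a compact connected set of positive Lebesgue measure, and let T be a probability density on 𝒮 that is L-Lipschitz with respect to the ℓ¹-norm for some L ≥ 0. Let (𝒮_t)_{t=1}^{m} be a finite partition of 𝒮 into hyperrectangles of positive Lebesgue measure whose pairwise intersections have measure zero, let p be the discretization of T, and let δ̄ be the maximum side length of any cell 𝒮_t over all dimensions. Then KL(T‖U) − KL_D(p‖pᵘ) ≤ Σ_{t=1}^{m} p_t log(1 + (n/(2 p_t)) L δ̄^{n+1}), where a summand is taken to be 0 whenever p_t = 0. -/

import Mathlib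

open MeasureTheory Real Finset

noncomputable section

private lemma refl_ineq {a b u v : ℝ} (h1 : a ≤ u) (h2 : u ≤ b) (h3 : a ≤ v) (h4 : v ≤ b) :
    |u - v| + |u - (a + b - v)| ≤ b - a := by
  rcases abs_cases (u - v) with ⟨e1, _⟩ | ⟨e1, _⟩ <;>
    rcases abs_cases (u - (a + b - v)) with ⟨e2, _⟩ | ⟨e2, _⟩ <;> linarith

private lemma box_avg {n : ℕ} (a b s : Fin n → ℝ) (hs : s ∈ Set.Icc a b) :
    ∫ y in Set.Icc a b, (∑ j, |s j - y j|) ≤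
      ((∑ j, (b j - a j)) / 2) * (volume (Set.Icc a b)).toReal := by
  set F : (Fin n → ℝ) → ℝ := fun y => ∑ j, |s j - y j| with hF
  have hFc : Continuous F :=
    continuous_finset_sum _ fun j _ => (continuous_const.sub (continuous_apply j)).abs
  have hK : IsCompact (Set.Icc a b) := isCompact_Icc
  have hFi : IntegrableOn F (Set.Icc a b) := hFc.continuousOn.integrableOn_compact hK
  set c : Fin n → ℝ := a + b with hc
  have hpre : (fun y => c - y) ⁻¹' Set.Icc a b = Set.Icc a b := by
    ext y
    simp only [Set.mem_preimage, Set.mem_Icc, Pi.le_def, Pi.sub_apply, hc, Pi.add_apply]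
    constructor
    · rintro ⟨h1, h2⟩
      exact ⟨fun j => by linarith [h1 j, h2 j], fun j => by linarith [h1 j, h2 j]⟩
    · rintro ⟨h1, h2⟩
      exact ⟨fun j => by linarith [h1 j, h2 j], fun j => by linarith [h1 j, h2 j]⟩
  have key : ∫ y in Set.Icc a b, F (c - y) = ∫ y in Set.Icc a b, F y := by
    have h := (Measure.measurePreserving_sub_left
        (volume : Measure (Fin n → ℝ)) c).setIntegral_preimage_emb
        ((Homeomorph.subLeft c).measurableEmbedding) F (Set.Icc a b)
    rw [hpre] at h
    exact h
  have hFci : IntegrableOn (fun y => F (c - y)) (Set.Icc a b) :=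
    (hFc.comp (continuous_const.sub continuous_id)).continuousOn.integrableOn_compact hK
  have hbound : ∀ y ∈ Set.Icc a b, F y + F (c - y) ≤ ∑ j, (b j - a j) := by
    intro y hy
    have : F y + F (c - y) = ∑ j, (|s j - y j| + |s j - (a j + b j - y j)|) := by
      rw [hF]
      simp only [Pi.sub_apply, hc, Pi.add_apply]
      rw [← Finset.sum_add_distrib]
    rw [this]
    exact Finset.sum_le_sum fun j _ => refl_ineq (hs.1 j) (hs.2 j) (hy.1 j) (hy.2 j)
  have h2I : 2 * ∫ y in Set.Icc a b, F y
      ≤ (∑ j, (b j - a j)) * (volume (Set.Icc a b)).toReal := by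
    have step1 : 2 * ∫ y in Set.Icc a b, F y
        = ∫ y in Set.Icc a b, (F y + F (c - y)) := by
      rw [integral_add hFi hFci, key]; ring
    have step2 : ∫ y in Set.Icc a b, (F y + F (c - y))
        ≤ ∫ _ in Set.Icc a b, (∑ j, (b j - a j)) := by
      refine setIntegral_mono_on (hFi.add hFci) ?_ measurableSet_Icc hbound
      exact integrableOn_const hK.measure_lt_top.ne
    have step3 : ∫ _ in Set.Icc a b, (∑ j, (b j - a j))
        = (volume (Set.Icc a b)).toReal * (∑ j, (b j - a j)) := by
      rw [setIntegral_const, smul_eq_mul, measureReal_def]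
    linarith
  linarith

set_option maxHeartbeats 1000000 in
/-- Lemma: Discretization Difference Upper-Bound:
`KL(T‖U) − KL_D(p‖pᵘ) ≤ Σ_t p_t log(1 + (n/(2 p_t)) L δ̄^{n+1})`. -/
theorem discretization_difference_upper_bound
    (n m : ℕ)
    (𝒮 : Set (Fin n → ℝ))
    (hcomp : IsCompact 𝒮) (hconn : IsConnected 𝒮) (hpos : 0 < volume 𝒮)
    (T : (Fin n → ℝ) → ℝ)
    (hTnonneg : ∀ s ∈ 𝒮, 0 ≤ T s)
    (hTint : (∫ s in 𝒮, T s) = 1)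
    -- T is L-Lipschitz w.r.t. the ℓ¹-norm
    (L : ℝ) (hL : 0 ≤ L)
    (hTLip : ∀ x ∈ 𝒮, ∀ y ∈ 𝒮, |T x - T y| ≤ L * ∑ j : Fin n, |x j - y j|)
    -- hyperrectangular partition of 𝒮
    (St : Fin m → Set (Fin n → ℝ))
    (α β : Fin m → Fin n → ℝ)
    (hSt : ∀ t, St t = Set.Icc (α t) (β t))
    (hStpos : ∀ t, 0 < volume (St t))
    (hcover : (⋃ t, St t) = 𝒮)
    (hdisj : ∀ t t', t ≠ t' → volume (St t ∩ St t') = 0)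
    -- maximum side length δ̄ over all cells and dimensions
    (δbar : ℝ)
    (hδbar₁ : ∀ t j, β t j - α t j ≤ δbar)
    (hδbar₂ : ∃ t j, β t j - α t j = δbar)
    -- discretization of T
    (p : Fin m → ℝ) (hp : ∀ t, p t = ∫ s in St t, T s) :
    (∫ s in 𝒮, T s * Real.log (T s * (volume 𝒮).toReal))
        - (∑ t, p t * Real.log (p t * (volume 𝒮).toReal / (volume (St t)).toReal))
      ≤ ∑ t, p t * Real.log (1 + (n : ℝ) / (2 * p t) * L * δbar ^ (n + 1)) := by
  have hSsub : ∀ t, St t ⊆ 𝒮 := fun t => hcover ▸ Set.subset_iUnion St t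
  have hSmeas : MeasurableSet 𝒮 := hcomp.isClosed.measurableSet
  have hStmeas : ∀ t, MeasurableSet (St t) := fun t => (hSt t) ▸ measurableSet_Icc
  have hStcomp : ∀ t, IsCompact (St t) := fun t => (hSt t) ▸ isCompact_Icc
  have hab : ∀ t j, α t j < β t j := by
    intro t j
    by_contra h
    push_neg at h
    have hv : volume (St t) = 0 := by
      rw [hSt t, Real.volume_Icc_pi]
      exact Finset.prod_eq_zero (Finset.mem_univ j)
        (by simp [ENNReal.ofReal_eq_zero]; linarith)
    exact absurd hv (hStpos t).ne'
  have hδpos : 0 < δbar := by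
    obtain ⟨t, j, h⟩ := hδbar₂
    linarith [hab t j]
  have hlamt : ∀ t, (volume (St t)).toReal = ∏ j, (β t j - α t j) := fun t => by
    rw [hSt t, Real.volume_Icc_pi_toReal (fun j => (hab t j).le)]
  have hlamtpos : ∀ t, 0 < (volume (St t)).toReal := fun t => by
    rw [hlamt t]
    exact Finset.prod_pos fun j _ => sub_pos.2 (hab t j)
  have hlamtle : ∀ t, (volume (St t)).toReal ≤ δbar ^ n := by
    intro t
    rw [hlamt t]
    calc ∏ j, (β t j - α t j) ≤ ∏ _j : Fin n, δbar :=
          Finset.prod_le_prod (fun j _ => (sub_pos.2 (hab t j)).le) (fun j _ => hδbar₁ t j)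
      _ = δbar ^ n := by simp
  -- continuity of T on 𝒮
  have hTcont : ContinuousOn T 𝒮 := by
    have hlip : LipschitzOnWith (Real.toNNReal (L * n)) T 𝒮 := by
      apply LipschitzOnWith.of_dist_le_mul
      intro x hx y hy
      rw [Real.dist_eq]
      have h1 : |T x - T y| ≤ L * ∑ j, |x j - y j| := hTLip x hx y hy
      have h2 : ∑ j : Fin n, |x j - y j| ≤ n * dist x y := by
        calc ∑ j : Fin n, |x j - y j| ≤ ∑ _j : Fin n, dist x y :=
              Finset.sum_le_sum fun j _ => by
                rw [← Real.dist_eq]; exact dist_le_pi_dist x y j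
          _ = n * dist x y := by simp [mul_comm]
      have h3 : (Real.toNNReal (L * n) : ℝ) = L * n := Real.coe_toNNReal _ (by positivity)
      calc |T x - T y| ≤ L * (n * dist x y) := by
            calc |T x - T y| ≤ L * ∑ j, |x j - y j| := h1
              _ ≤ L * (n * dist x y) := by
                apply mul_le_mul_of_nonneg_left h2 hL
        _ = (Real.toNNReal (L * n) : ℝ) * dist x y := by rw [h3]; ring
    exact hlip.continuousOn
  have hTint𝒮 : IntegrableOn T 𝒮 := hTcont.integrableOn_compact hcomp
  have hgTcont : ContinuousOn (fun s => T s * Real.log (T s)) 𝒮 :=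
    Real.continuous_mul_log.comp_continuousOn hTcont
  have hgTint : IntegrableOn (fun s => T s * Real.log (T s)) 𝒮 :=
    hgTcont.integrableOn_compact hcomp
  -- decomposition of integrals over the partition
  have hsplit : ∀ f : (Fin n → ℝ) → ℝ, IntegrableOn f 𝒮 →
      (∫ s in 𝒮, f s) = ∑ t, ∫ s in St t, f s := by
    intro f hf
    have hf' : IntegrableOn f (⋃ t, St t) := by rw [hcover]; exact hf
    have hd : Pairwise (Function.onFun (AEDisjoint volume) St) := fun t t' h => hdisj t t' h
    calc ∫ s in 𝒮, f s = ∫ s in ⋃ t, St t, f s := by rw [hcover]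
      _ = ∑' t, ∫ s in St t, f s :=
          integral_iUnion_ae (fun t => (hStmeas t).nullMeasurableSet) hd hf'
      _ = ∑ t, ∫ s in St t, f s := tsum_fintype _
  have hpsum : ∑ t, p t = 1 := by
    rw [← hTint, hsplit T hTint𝒮]
    exact Finset.sum_congr rfl fun t _ => (hp t).symm ▸ rfl
  have hppos : ∀ t, 0 ≤ p t := fun t =>
    (hp t) ▸ setIntegral_nonneg (hStmeas t) (fun s hs => hTnonneg s (hSsub t hs))
  have hc : 0 < (volume 𝒮).toReal :=
    ENNReal.toReal_pos hpos.ne' hcomp.measure_lt_top.ne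
  set c := (volume 𝒮).toReal with hcdef
  -- LHS transformation
  have hLHS : ∫ s in 𝒮, T s * Real.log (T s * c)
      = (∫ s in 𝒮, T s * Real.log (T s)) + Real.log c := by
    have heq : Set.EqOn (fun s => T s * Real.log (T s * c))
        (fun s => T s * Real.log (T s) + T s * Real.log c) 𝒮 := by
      intro s hs
      rcases eq_or_lt_of_le (hTnonneg s hs) with h | h
      · simp [← h]
      · simp only
        rw [Real.log_mul h.ne' hc.ne']
        ring
    rw [setIntegral_congr_fun hSmeas heq, integral_add hgTint (hTint𝒮.mul_const _),
      integral_mul_const, hTint, one_mul]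
  -- RHS discrete transformation
  have hRHS : ∑ t, p t * Real.log (p t * c / (volume (St t)).toReal)
      = (∑ t, p t * Real.log (p t / (volume (St t)).toReal)) + Real.log c := by
    have heq : ∀ t, p t * Real.log (p t * c / (volume (St t)).toReal)
        = p t * Real.log (p t / (volume (St t)).toReal) + p t * Real.log c := by
      intro t
      rcases eq_or_lt_of_le (hppos t) with h | h
      · simp [← h]
      · have harg : p t * c / (volume (St t)).toReal
            = (p t / (volume (St t)).toReal) * c := by ring
        rw [harg, Real.log_mul (div_pos h (hlamtpos t)).ne' hc.ne']
        ring
    rw [Finset.sum_congr rfl fun t _ => heq t, Finset.sum_add_distrib, ← Finset.sum_mul,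
      hpsum, one_mul]
  -- per-cell estimate
  have hcell : ∀ t, ∫ s in St t, T s * Real.log (T s)
      ≤ p t * Real.log (p t / (volume (St t)).toReal)
        + p t * Real.log (1 + (n : ℝ) / (2 * p t) * L * δbar ^ (n + 1)) := by
    intro t
    have hTintSt : IntegrableOn T (St t) := hTint𝒮.mono_set (hSsub t)
    rcases eq_or_lt_of_le (hppos t) with hp0 | hp0
    · -- p t = 0
      have hnonneg : 0 ≤ᵐ[volume.restrict (St t)] T :=
        (ae_restrict_iff' (hStmeas t)).2 (Filter.Eventually.of_forall
          fun s hs => hTnonneg s (hSsub t hs))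
      have hTz : T =ᵐ[volume.restrict (St t)] 0 :=
        (integral_eq_zero_iff_of_nonneg_ae hnonneg hTintSt).mp ((hp t).symm.trans hp0.symm)
      have hz : ∫ s in St t, T s * Real.log (T s) = 0 := by
        have hz' : (fun s => T s * Real.log (T s)) =ᵐ[volume.restrict (St t)] 0 := by
          filter_upwards [hTz] with s hs
          simp only [Pi.zero_apply] at hs ⊢
          simp [hs]
        rw [integral_congr_ae hz']
        simp
      rw [hz, ← hp0]
      simp
    · -- p t > 0
      set lamt := (volume (St t)).toReal with hlamdef
      have hlampos : 0 < lamt := hlamtpos t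
      set M := p t / lamt + L * n * δbar / 2 with hM
      have hMpos : 0 < M :=
        add_pos_of_pos_of_nonneg (div_pos hp0 hlampos) (by positivity)
      -- pointwise upper bound on T over the cell
      have hpt_bound : ∀ s ∈ St t, T s ≤ M := by
        intro s hs
        have hsIcc : s ∈ Set.Icc (α t) (β t) := (hSt t) ▸ hs
        have havg := box_avg (α t) (β t) s hsIcc
        set F : (Fin n → ℝ) → ℝ := fun y => ∑ j, |s j - y j| with hF
        have hFc : Continuous F :=
          continuous_finset_sum _ fun j _ => (continuous_const.sub (continuous_apply j)).abs
        have hFi : IntegrableOn F (St t) :=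
          hFc.continuousOn.integrableOn_compact (hStcomp t)
        have hlow : ∀ y ∈ St t, T s - L * F y ≤ T y := by
          intro y hy
          have h1 := hTLip s (hSsub t hs) y (hSsub t hy)
          have h2 : T s - T y ≤ |T s - T y| := le_abs_self _
          simp only [hF]
          linarith
        have hconsti : IntegrableOn (fun _ : Fin n → ℝ => T s) (St t) :=
          integrableOn_const (hStcomp t).measure_lt_top.ne
        have hint1 : ∫ y in St t, (T s - L * F y) ≤ ∫ y in St t, T y :=
          setIntegral_mono_on (hconsti.sub (hFi.const_mul L)) hTintSt (hStmeas t) hlow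
        have hcomp1 : ∫ y in St t, (T s - L * F y)
            = T s * lamt - L * ∫ y in St t, F y := by
          rw [integral_sub hconsti (hFi.const_mul L), setIntegral_const, smul_eq_mul,
            measureReal_def, ← hlamdef, integral_const_mul]
          ring
        have hIle : ∫ y in St t, F y ≤ ((n : ℝ) * δbar / 2) * lamt := by
          have h1 : ∫ y in St t, F y
              ≤ ((∑ j, (β t j - α t j)) / 2) * lamt := by
            have := havg
            rw [← hSt t] at this
            exact this
          have h2 : ∑ j, (β t j - α t j) ≤ (n : ℝ) * δbar := by
            calc ∑ j, (β t j - α t j) ≤ ∑ _j : Fin n, δbar :=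
                  Finset.sum_le_sum fun j _ => hδbar₁ t j
              _ = (n : ℝ) * δbar := by simp
          nlinarith
        have hfinal : T s * lamt ≤ p t + L * ((n : ℝ) * δbar / 2) * lamt := by
          have hLI : L * ∫ y in St t, F y ≤ L * (((n : ℝ) * δbar / 2) * lamt) :=
            mul_le_mul_of_nonneg_left hIle hL
          have := hint1
          rw [hcomp1, ← hp t] at this
          nlinarith
        have : T s * lamt ≤ M * lamt := by
          rw [hM]
          have : (p t / lamt + L * ↑n * δbar / 2) * lamt = p t + L * ((n : ℝ) * δbar / 2) * lamt := by
            field_simp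
          rw [this]
          exact hfinal
        exact le_of_mul_le_mul_right (by linarith) hlampos
      -- T log T ≤ T log M pointwise
      have hlog_mono : ∀ s ∈ St t, T s * Real.log (T s) ≤ T s * Real.log M := by
        intro s hs
        rcases eq_or_lt_of_le (hTnonneg s (hSsub t hs)) with h | h
        · simp [← h]
        · exact mul_le_mul_of_nonneg_left (Real.log_le_log h (hpt_bound s hs)) h.le
      have hineq : ∫ s in St t, T s * Real.log (T s) ≤ p t * Real.log M := by
        have hgint : IntegrableOn (fun s => T s * Real.log (T s)) (St t) :=
          hgTint.mono_set (hSsub t)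
        calc ∫ s in St t, T s * Real.log (T s)
            ≤ ∫ s in St t, T s * Real.log M :=
              setIntegral_mono_on hgint (hTintSt.mul_const _) (hStmeas t) hlog_mono
          _ = (∫ s in St t, T s) * Real.log M := integral_mul_const _ _
          _ = p t * Real.log M := by rw [← hp t]
      -- split log M
      have hMsplit : Real.log M = Real.log (p t / lamt) + Real.log (M * lamt / p t) := by
        have h1 : lamt ≠ 0 := hlampos.ne'
        have h2 : p t ≠ 0 := hp0.ne'
        have harg : p t / lamt * (M * lamt / p t) = M := by
          field_simp
        rw [← Real.log_mul (div_pos hp0 hlampos).ne'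
          (div_pos (mul_pos hMpos hlampos) hp0).ne', harg]
      have hfrac : M * lamt / p t ≤ 1 + (n : ℝ) / (2 * p t) * L * δbar ^ (n + 1) := by
        have he1 : M * lamt / p t = 1 + (L * (n : ℝ) * δbar / 2) * lamt / p t := by
          rw [hM]
          field_simp
        have he2 : 1 + ((n : ℝ)) / (2 * p t) * L * δbar ^ (n + 1)
            = 1 + (L * (n : ℝ) * δbar / 2) * δbar ^ n / p t := by
          rw [pow_succ]
          field_simp
        rw [he1, he2]
        have h3 : (L * (n : ℝ) * δbar / 2) * lamt ≤ (L * (n : ℝ) * δbar / 2) * δbar ^ n :=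
          mul_le_mul_of_nonneg_left (hlamtle t) (by positivity)
        have h4 : (L * (n : ℝ) * δbar / 2) * lamt / p t
            ≤ (L * (n : ℝ) * δbar / 2) * δbar ^ n / p t := by gcongr
        linarith
      have hlogfrac : Real.log (M * lamt / p t)
          ≤ Real.log (1 + (n : ℝ) / (2 * p t) * L * δbar ^ (n + 1)) :=
        Real.log_le_log (div_pos (mul_pos hMpos hlampos) hp0) hfrac
      calc ∫ s in St t, T s * Real.log (T s) ≤ p t * Real.log M := hineq
        _ = p t * Real.log (p t / lamt) + p t * Real.log (M * lamt / p t) := by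
            rw [hMsplit]; ring
        _ ≤ p t * Real.log (p t / lamt)
              + p t * Real.log (1 + (n : ℝ) / (2 * p t) * L * δbar ^ (n + 1)) := by
            have := mul_le_mul_of_nonneg_left hlogfrac (hppos t)
            linarith
  -- assemble
  rw [hLHS, hRHS, hsplit _ hgTint]
  have hsum := Finset.sum_le_sum (fun t (_ : t ∈ Finset.univ) => hcell t)
  rw [Finset.sum_add_distrib] at hsum
  linarith
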